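/- Let c = −7/4 and let (x₁, x₂, x₃) be the 3-cycle of f_c whose components are the roots of x³ + (1/2)x² − (9/4)x − 1/8 = 0, ordered with x₁ ∈ (−2, −1), x₂ ∈ (1, 2), x₃ ∈ (−1/10, 0). Then f_c'(x₁)·f_c'(x₂)·f_c'(x₃) = 8x₁x₂x₃ = 1, and the third iterate F = f_c ∘ f_c ∘ f_c satisfies F''(x₁) > 0, F''(x₂) < 0 and F''(x₃) < 0; in particular F''(x_i) ≠ 0 for i = 1, 2, 3, so this non-hyperbolic 3-cycle is unstable. -/

import Mathlib

private lemma hasD1 (x : ℝ) :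
    HasDerivAt (fun x : ℝ => x ^ 8 - 7 * x ^ 6 + 119 / 8 * x ^ 4 - 147 / 16 * x ^ 2 - 7 / 256)
      (8 * x ^ 7 - 42 * x ^ 5 + 119 / 2 * x ^ 3 - 147 / 8 * x) x := by
  have h := ((((hasDerivAt_pow 8 x).sub ((hasDerivAt_pow 6 x).const_mul (7 : ℝ))).add
      ((hasDerivAt_pow 4 x).const_mul (119 / 8 : ℝ))).sub
      ((hasDerivAt_pow 2 x).const_mul (147 / 16 : ℝ))).sub_const (7 / 256 : ℝ)
  refine h.congr_deriv ?_
  push_cast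
  ring

private lemma hasD2 (x : ℝ) :
    HasDerivAt (fun x : ℝ => 8 * x ^ 7 - 42 * x ^ 5 + 119 / 2 * x ^ 3 - 147 / 8 * x)
      (56 * x ^ 6 - 210 * x ^ 4 + 357 / 2 * x ^ 2 - 147 / 8) x := by
  have h := ((((hasDerivAt_pow 7 x).const_mul (8 : ℝ)).sub
      ((hasDerivAt_pow 5 x).const_mul (42 : ℝ))).add
      ((hasDerivAt_pow 3 x).const_mul (119 / 2 : ℝ))).sub ((hasDerivAt_id x).const_mul (147 / 8 : ℝ))
  refine h.congr_deriv ?_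
  push_cast
  ring

private lemma secondDeriv (x : ℝ) :
    iteratedDeriv 2 (fun x : ℝ => ((x ^ 2 + (-7 / 4)) ^ 2 + (-7 / 4)) ^ 2 + (-7 / 4)) x
      = 56 * x ^ 6 - 210 * x ^ 4 + 357 / 2 * x ^ 2 - 147 / 8 := by
  have hfun : (fun x : ℝ => ((x ^ 2 + (-7 / 4)) ^ 2 + (-7 / 4)) ^ 2 + (-7 / 4))
      = fun x : ℝ => x ^ 8 - 7 * x ^ 6 + 119 / 8 * x ^ 4 - 147 / 16 * x ^ 2 - 7 / 256 := by
    funext x; ring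
  have hd1 : deriv (fun x : ℝ => x ^ 8 - 7 * x ^ 6 + 119 / 8 * x ^ 4 - 147 / 16 * x ^ 2 - 7 / 256)
      = fun x : ℝ => 8 * x ^ 7 - 42 * x ^ 5 + 119 / 2 * x ^ 3 - 147 / 8 * x := by
    funext y; exact (hasD1 y).deriv
  rw [hfun, show (2 : ℕ) = 1 + 1 from rfl, iteratedDeriv_succ, iteratedDeriv_one, hd1]
  exact (hasD2 x).deriv

theorem stmt_17 (x₁ x₂ x₃ : ℝ)
    (hr₁ : x₁ ^ 3 + (1 / 2) * x₁ ^ 2 - (9 / 4) * x₁ - 1 / 8 = 0)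
    (hr₂ : x₂ ^ 3 + (1 / 2) * x₂ ^ 2 - (9 / 4) * x₂ - 1 / 8 = 0)
    (hr₃ : x₃ ^ 3 + (1 / 2) * x₃ ^ 2 - (9 / 4) * x₃ - 1 / 8 = 0)
    (hI₁ : x₁ ∈ Set.Ioo (-2 : ℝ) (-1)) (hI₂ : x₂ ∈ Set.Ioo (1 : ℝ) 2)
    (hI₃ : x₃ ∈ Set.Ioo (-1 / 10 : ℝ) 0)
    (h₁ : x₁ ^ 2 + (-7 / 4) = x₂) (h₂ : x₂ ^ 2 + (-7 / 4) = x₃)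
    (h₃ : x₃ ^ 2 + (-7 / 4) = x₁) :
    8 * (x₁ * x₂ * x₃) = 1 ∧
    deriv (fun x : ℝ => x ^ 2 + (-7 / 4)) x₁ * deriv (fun x : ℝ => x ^ 2 + (-7 / 4)) x₂ *
      deriv (fun x : ℝ => x ^ 2 + (-7 / 4)) x₃ = 1 ∧
    0 < iteratedDeriv 2
        (fun x : ℝ => ((x ^ 2 + (-7 / 4)) ^ 2 + (-7 / 4)) ^ 2 + (-7 / 4)) x₁ ∧
    iteratedDeriv 2
        (fun x : ℝ => ((x ^ 2 + (-7 / 4)) ^ 2 + (-7 / 4)) ^ 2 + (-7 / 4)) x₂ < 0 ∧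
    iteratedDeriv 2
        (fun x : ℝ => ((x ^ 2 + (-7 / 4)) ^ 2 + (-7 / 4)) ^ 2 + (-7 / 4)) x₃ < 0 := by
  obtain ⟨hI₁l, hI₁r⟩ := hI₁
  obtain ⟨hI₂l, hI₂r⟩ := hI₂
  obtain ⟨hI₃l, hI₃r⟩ := hI₃
  have h12 : x₁ - x₂ ≠ 0 := sub_ne_zero.mpr (by linarith)
  have h13 : x₁ - x₃ ≠ 0 := sub_ne_zero.mpr (by linarith)
  have h23 : x₂ - x₃ ≠ 0 := sub_ne_zero.mpr (by linarith)
  have e12 : x₁ ^ 2 + x₁ * x₂ + x₂ ^ 2 + (x₁ + x₂) / 2 - 9 / 4 = 0 := by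
    apply mul_left_cancel₀ h12
    linear_combination hr₁ - hr₂
  have e13 : x₁ ^ 2 + x₁ * x₃ + x₃ ^ 2 + (x₁ + x₃) / 2 - 9 / 4 = 0 := by
    apply mul_left_cancel₀ h13
    linear_combination hr₁ - hr₃
  have hs : x₁ + x₂ + x₃ + 1 / 2 = 0 := by
    apply mul_left_cancel₀ h23
    linear_combination e12 - e13
  have hprod12 : x₁ * x₂ = x₃ ^ 2 + x₃ / 2 - 9 / 4 := by
    linear_combination (-1 : ℝ) * e12 + (x₁ + x₂ - x₃) * hs
  have hprod : 8 * (x₁ * x₂ * x₃) = 1 := by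
    linear_combination 8 * x₃ * hprod12 + 8 * hr₃
  refine ⟨hprod, ?_, ?_, ?_, ?_⟩
  · have hd : ∀ y : ℝ, deriv (fun x : ℝ => x ^ 2 + (-7 / 4)) y = 2 * y := by
      intro y
      simpa using (((hasDerivAt_pow 2 y).add_const (-7 / 4 : ℝ)).deriv)
    rw [hd, hd, hd]
    linear_combination hprod
  · rw [secondDeriv]
    have key : 56 * x₁ ^ 6 - 210 * x₁ ^ 4 + 357 / 2 * x₁ ^ 2 - 147 / 8
        = 28 * x₁ ^ 2 - 56 * x₁ - 21 := by
      linear_combination (56 * x₁ ^ 3 - 28 * x₁ ^ 2 - 70 * x₁ - 21) * hr₁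
    rw [key]
    nlinarith [mul_pos (by linarith : (0 : ℝ) < -(x₁ + 1)) (by linarith : (0 : ℝ) < 3 - x₁)]
  · rw [secondDeriv]
    have key : 56 * x₂ ^ 6 - 210 * x₂ ^ 4 + 357 / 2 * x₂ ^ 2 - 147 / 8
        = 28 * x₂ ^ 2 - 56 * x₂ - 21 := by
      linear_combination (56 * x₂ ^ 3 - 28 * x₂ ^ 2 - 70 * x₂ - 21) * hr₂
    rw [key]
    nlinarith [mul_pos (by linarith : (0 : ℝ) < x₂) (by linarith : (0 : ℝ) < 2 - x₂)]
  · rw [secondDeriv]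
    have key : 56 * x₃ ^ 6 - 210 * x₃ ^ 4 + 357 / 2 * x₃ ^ 2 - 147 / 8
        = 28 * x₃ ^ 2 - 56 * x₃ - 21 := by
      linear_combination (56 * x₃ ^ 3 - 28 * x₃ ^ 2 - 70 * x₃ - 21) * hr₃
    rw [key]
    nlinarith [mul_pos (by linarith : (0 : ℝ) < x₃ + 1 / 10) (by linarith : (0 : ℝ) < -x₃)]
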